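/- For n ≥ 4, the vertex set of the standard n-cube {−1,1}^n ⊂ ℝ^n is not 4-point homogeneous: there exist two quadruples of vertices with equal corresponding pairwise Euclidean distances such that no distance-preserving bijection of {−1,1}^n onto itself maps the first quadruple onto the second pointwise. Specifically, for n = 4, the quadruples ((1,1,1,1),(−1,−1,1,1),(−1,1,−1,1),(−1,1,1,−1)) and ((1,1,1,1),(−1,−1,1,1),(−1,1,−1,1),(1,−1,−1,1)) have this property. -/

import Mathlib

/-- The vertex set of the standard `n`-cube `{−1,1}ⁿ`. -/
def cubeVertices (n : ℕ) : Set (EuclideanSpace ℝ (Fin n)) :=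
  {x | ∀ i, x i = 1 ∨ x i = -1}

/-- The first quadruple: `(1,…,1)`, and for `k = 1,2,3` the vertex with `−1`
in coordinates `0` and `k` and `1` elsewhere. -/
def quadA (n : ℕ) : Fin 4 → EuclideanSpace ℝ (Fin n) := fun k =>
  (WithLp.toLp 2 (fun i : Fin n => if k ≠ 0 ∧ ((i : ℕ) = 0 ∨ (i : ℕ) = (k : ℕ)) then (-1 : ℝ) else 1) :
    EuclideanSpace ℝ (Fin n))

/-- The second quadruple: same first three vertices, and last vertex
`(1,−1,−1,1,1,…,1)`. -/
def quadB (n : ℕ) : Fin 4 → EuclideanSpace ℝ (Fin n) := fun k =>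
  if k = 3 then
    (WithLp.toLp 2 (fun i : Fin n => if (i : ℕ) = 1 ∨ (i : ℕ) = 2 then (-1 : ℝ) else 1) : EuclideanSpace ℝ (Fin n))
  else quadA n k

/-- The auxiliary vertex `(−1,1,1,…,1)`. -/
def vNeg (n : ℕ) : EuclideanSpace ℝ (Fin n) :=
  (WithLp.toLp 2 (fun i : Fin n => if (i : ℕ) = 0 then (-1 : ℝ) else 1) : EuclideanSpace ℝ (Fin n))

lemma quadA_apply (n : ℕ) (k : Fin 4) (i : Fin n) :
    quadA n k i = if k ≠ 0 ∧ ((i : ℕ) = 0 ∨ (i : ℕ) = (k : ℕ)) then -1 else 1 := rfl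

lemma quadB3_apply (n : ℕ) (i : Fin n) :
    quadB n 3 i = if (i : ℕ) = 1 ∨ (i : ℕ) = 2 then -1 else 1 := by
  simp [quadB]

lemma quadB_eq (n : ℕ) (k : Fin 4) (h : k ≠ 3) : quadB n k = quadA n k := if_neg h

lemma vNeg_apply (n : ℕ) (i : Fin n) :
    vNeg n i = if (i : ℕ) = 0 then -1 else 1 := rfl

lemma c0 : ((0:Fin 4):ℕ) = 0 := rfl
lemma c1 : ((1:Fin 4):ℕ) = 1 := rfl
lemma c2 : ((2:Fin 4):ℕ) = 2 := rfl
lemma c3 : ((3:Fin 4):ℕ) = 3 := rfl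

lemma distSum {n : ℕ} (x y : EuclideanSpace ℝ (Fin n)) :
    dist x y = Real.sqrt (∑ i, (x i - y i) ^ 2) := by
  rw [EuclideanSpace.dist_eq]
  congr 1
  refine Finset.sum_congr rfl fun i _ => ?_
  rw [Real.dist_eq, sq_abs]

lemma distOne {n : ℕ} (x y : EuclideanSpace ℝ (Fin n)) (a : Fin n)
    (hoff : ∀ i, i ≠ a → x i = y i) (ha : (x a - y a) ^ 2 = 4) :
    dist x y = 2 := by
  rw [distSum]
  have h : ∑ i, (x i - y i) ^ 2 = 4 := by
    rw [← ha, ← Finset.sum_singleton (fun i => (x i - y i) ^ 2) a]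
    refine (Finset.sum_subset (Finset.subset_univ _) fun i _ hi => ?_).symm
    rw [Finset.mem_singleton] at hi
    rw [hoff i hi, sub_self]
    norm_num
  rw [h, show (4:ℝ) = 2 ^ 2 by norm_num, Real.sqrt_sq (by norm_num)]

lemma distTwo {n : ℕ} (x y : EuclideanSpace ℝ (Fin n)) (a b : Fin n) (hab : a ≠ b)
    (hoff : ∀ i, i ≠ a → i ≠ b → x i = y i)
    (ha : (x a - y a) ^ 2 = 4) (hb : (x b - y b) ^ 2 = 4) :
    dist x y = Real.sqrt 8 := by
  rw [distSum]
  congr 1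
  rw [show (8:ℝ) = ∑ i ∈ ({a, b} : Finset (Fin n)), (x i - y i) ^ 2 by
    rw [Finset.sum_pair hab, ha, hb]; norm_num]
  refine (Finset.sum_subset (Finset.subset_univ _) fun i _ hi => ?_).symm
  simp only [Finset.mem_insert, Finset.mem_singleton, not_or] at hi
  rw [hoff i hi.1 hi.2, sub_self]
  norm_num

lemma hval {n : ℕ} (i : Fin n) (m : ℕ) (hm : m < n) (h : i ≠ ⟨m, hm⟩) : (i:ℕ) ≠ m :=
  fun hc => h (Fin.ext hc)

section cases

variable {n : ℕ} (hn : 4 ≤ n)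

lemma case03 (hn : 4 ≤ n) :
    dist (quadA n 0) (quadA n 3) = dist (quadB n 0) (quadB n 3) := by
  have h0 : (0:ℕ) < n := by omega
  have h1 : (1:ℕ) < n := by omega
  have h2 : (2:ℕ) < n := by omega
  have h3 : (3:ℕ) < n := by omega
  rw [quadB_eq n 0 (by decide),
    distTwo (quadA n 0) (quadA n 3) ⟨0, h0⟩ ⟨3, h3⟩ (by simp)
      (fun i hia hib => by
        have e0 := hval i 0 h0 hia
        have e3 := hval i 3 h3 hib
        rw [quadA_apply, quadA_apply, if_neg (fun h => h.1 rfl),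
          if_neg (by push_neg; intro; exact ⟨e0, fun hc => e3 (hc.trans c3)⟩)])
      (by rw [quadA_apply, quadA_apply, if_neg (fun h => h.1 rfl),
          if_pos ⟨by decide, Or.inl rfl⟩]; norm_num)
      (by rw [quadA_apply, quadA_apply, if_neg (fun h => h.1 rfl),
          if_pos ⟨by decide, Or.inr rfl⟩]; norm_num),
    distTwo (quadA n 0) (quadB n 3) ⟨1, h1⟩ ⟨2, h2⟩ (by simp)
      (fun i hia hib => by
        have e1 := hval i 1 h1 hia
        have e2 := hval i 2 h2 hib
        rw [quadA_apply, quadB3_apply, if_neg (fun h => h.1 rfl),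
          if_neg (by push_neg; exact ⟨e1, e2⟩)])
      (by rw [quadA_apply, quadB3_apply, if_neg (fun h => h.1 rfl),
          if_pos (Or.inl rfl)]; norm_num)
      (by rw [quadA_apply, quadB3_apply, if_neg (fun h => h.1 rfl),
          if_pos (Or.inr rfl)]; norm_num)]

lemma case13 (hn : 4 ≤ n) :
    dist (quadA n 1) (quadA n 3) = dist (quadB n 1) (quadB n 3) := by
  have h0 : (0:ℕ) < n := by omega
  have h1 : (1:ℕ) < n := by omega
  have h2 : (2:ℕ) < n := by omega
  have h3 : (3:ℕ) < n := by omega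
  rw [quadB_eq n 1 (by decide),
    distTwo (quadA n 1) (quadA n 3) ⟨1, h1⟩ ⟨3, h3⟩ (by simp)
      (fun i hia hib => by
        have e1 := hval i 1 h1 hia
        have e3 := hval i 3 h3 hib
        rw [quadA_apply, quadA_apply]
        by_cases h : (i:ℕ) = 0
        · rw [if_pos ⟨by decide, Or.inl h⟩, if_pos ⟨by decide, Or.inl h⟩]
        · rw [if_neg (by push_neg; intro; exact ⟨h, fun hc => e1 (hc.trans c1)⟩),
            if_neg (by push_neg; intro; exact ⟨h, fun hc => e3 (hc.trans c3)⟩)])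
      (by rw [quadA_apply, quadA_apply, if_pos ⟨by decide, Or.inr rfl⟩,
          if_neg (by push_neg; intro; exact ⟨by norm_num, by norm_num [c3]⟩)]; norm_num)
      (by rw [quadA_apply, quadA_apply,
          if_neg (by push_neg; intro; exact ⟨by norm_num, by norm_num [c1]⟩),
          if_pos ⟨by decide, Or.inr rfl⟩]; norm_num),
    distTwo (quadA n 1) (quadB n 3) ⟨0, h0⟩ ⟨2, h2⟩ (by simp)
      (fun i hia hib => by
        have e0 := hval i 0 h0 hia
        have e2 := hval i 2 h2 hib
        rw [quadA_apply, quadB3_apply]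
        by_cases h : (i:ℕ) = 1
        · rw [if_pos ⟨by decide, Or.inr h⟩, if_pos (Or.inl h)]
        · rw [if_neg (by push_neg; intro; exact ⟨e0, fun hc => h (hc.trans c1)⟩),
            if_neg (by push_neg; exact ⟨h, e2⟩)])
      (by rw [quadA_apply, quadB3_apply, if_pos ⟨by decide, Or.inl rfl⟩,
          if_neg (by push_neg; exact ⟨by norm_num, by norm_num⟩)]; norm_num)
      (by rw [quadA_apply, quadB3_apply,
          if_neg (by push_neg; intro; exact ⟨by norm_num, by norm_num [c1]⟩),
          if_pos (Or.inr rfl)]; norm_num)]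

lemma case23 (hn : 4 ≤ n) :
    dist (quadA n 2) (quadA n 3) = dist (quadB n 2) (quadB n 3) := by
  have h0 : (0:ℕ) < n := by omega
  have h1 : (1:ℕ) < n := by omega
  have h2 : (2:ℕ) < n := by omega
  have h3 : (3:ℕ) < n := by omega
  rw [quadB_eq n 2 (by decide),
    distTwo (quadA n 2) (quadA n 3) ⟨2, h2⟩ ⟨3, h3⟩ (by simp)
      (fun i hia hib => by
        have e2 := hval i 2 h2 hia
        have e3 := hval i 3 h3 hib
        rw [quadA_apply, quadA_apply]
        by_cases h : (i:ℕ) = 0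
        · rw [if_pos ⟨by decide, Or.inl h⟩, if_pos ⟨by decide, Or.inl h⟩]
        · rw [if_neg (by push_neg; intro; exact ⟨h, fun hc => e2 (hc.trans c2)⟩),
            if_neg (by push_neg; intro; exact ⟨h, fun hc => e3 (hc.trans c3)⟩)])
      (by rw [quadA_apply, quadA_apply, if_pos ⟨by decide, Or.inr rfl⟩,
          if_neg (by push_neg; intro; exact ⟨by norm_num, by norm_num [c3]⟩)]; norm_num)
      (by rw [quadA_apply, quadA_apply,
          if_neg (by push_neg; intro; exact ⟨by norm_num, by norm_num [c2]⟩),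
          if_pos ⟨by decide, Or.inr rfl⟩]; norm_num),
    distTwo (quadA n 2) (quadB n 3) ⟨0, h0⟩ ⟨1, h1⟩ (by simp)
      (fun i hia hib => by
        have e0 := hval i 0 h0 hia
        have e1 := hval i 1 h1 hib
        rw [quadA_apply, quadB3_apply]
        by_cases h : (i:ℕ) = 2
        · rw [if_pos ⟨by decide, Or.inr h⟩, if_pos (Or.inr h)]
        · rw [if_neg (by push_neg; intro; exact ⟨e0, fun hc => h (hc.trans c2)⟩),
            if_neg (by push_neg; exact ⟨e1, h⟩)])
      (by rw [quadA_apply, quadB3_apply, if_pos ⟨by decide, Or.inl rfl⟩,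
          if_neg (by push_neg; exact ⟨by norm_num, by norm_num⟩)]; norm_num)
      (by rw [quadA_apply, quadB3_apply,
          if_neg (by push_neg; intro; exact ⟨by norm_num, by norm_num [c2]⟩),
          if_pos (Or.inl rfl)]; norm_num)]

lemma case30 (hn : 4 ≤ n) :
    dist (quadA n 3) (quadA n 0) = dist (quadB n 3) (quadB n 0) := by
  rw [dist_comm (quadA n 3), dist_comm (quadB n 3)]; exact case03 hn

lemma case31 (hn : 4 ≤ n) :
    dist (quadA n 3) (quadA n 1) = dist (quadB n 3) (quadB n 1) := by
  rw [dist_comm (quadA n 3), dist_comm (quadB n 3)]; exact case13 hn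

lemma case32 (hn : 4 ≤ n) :
    dist (quadA n 3) (quadA n 2) = dist (quadB n 3) (quadB n 2) := by
  rw [dist_comm (quadA n 3), dist_comm (quadB n 3)]; exact case23 hn

end cases

set_option maxHeartbeats 1000000 in
theorem stmt10 (n : ℕ) (hn : 4 ≤ n) :
    (∀ k l, dist (quadA n k) (quadA n l) = dist (quadB n k) (quadB n l)) ∧
    ¬∃ f : EuclideanSpace ℝ (Fin n) → EuclideanSpace ℝ (Fin n),
      Set.BijOn f (cubeVertices n) (cubeVertices n) ∧
      (∀ x ∈ cubeVertices n, ∀ y ∈ cubeVertices n, dist (f x) (f y) = dist x y) ∧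
      ∀ k, f (quadA n k) = quadB n k := by
  have h0 : (0:ℕ) < n := by omega
  have h1 : (1:ℕ) < n := by omega
  have h2 : (2:ℕ) < n := by omega
  have h3 : (3:ℕ) < n := by omega
  constructor
  · intro k l
    have hk' : k = 0 ∨ k = 1 ∨ k = 2 ∨ k = 3 := by
      have := k.isLt
      rcases (by omega : (k:ℕ) = 0 ∨ (k:ℕ) = 1 ∨ (k:ℕ) = 2 ∨ (k:ℕ) = 3) with h|h|h|h
      exacts [Or.inl (Fin.ext h), Or.inr (Or.inl (Fin.ext h)),
        Or.inr (Or.inr (Or.inl (Fin.ext h))), Or.inr (Or.inr (Or.inr (Fin.ext h)))]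
    have hl' : l = 0 ∨ l = 1 ∨ l = 2 ∨ l = 3 := by
      have := l.isLt
      rcases (by omega : (l:ℕ) = 0 ∨ (l:ℕ) = 1 ∨ (l:ℕ) = 2 ∨ (l:ℕ) = 3) with h|h|h|h
      exacts [Or.inl (Fin.ext h), Or.inr (Or.inl (Fin.ext h)),
        Or.inr (Or.inr (Or.inl (Fin.ext h))), Or.inr (Or.inr (Or.inr (Fin.ext h)))]
    rcases hk' with rfl|rfl|rfl|rfl <;> rcases hl' with rfl|rfl|rfl|rfl
    · rw [quadB_eq n 0 (by decide)]
    · rw [quadB_eq n 0 (by decide), quadB_eq n 1 (by decide)]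
    · rw [quadB_eq n 0 (by decide), quadB_eq n 2 (by decide)]
    · exact case03 hn
    · rw [quadB_eq n 0 (by decide), quadB_eq n 1 (by decide)]
    · rw [quadB_eq n 1 (by decide)]
    · rw [quadB_eq n 1 (by decide), quadB_eq n 2 (by decide)]
    · exact case13 hn
    · rw [quadB_eq n 0 (by decide), quadB_eq n 2 (by decide)]
    · rw [quadB_eq n 1 (by decide), quadB_eq n 2 (by decide)]
    · rw [quadB_eq n 2 (by decide)]
    · exact case23 hn
    · exact case30 hn
    · exact case31 hn
    · exact case32 hn
    · rw [dist_self, dist_self]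
  · rintro ⟨f, hbij, hiso, hmap⟩
    have hv : vNeg n ∈ cubeVertices n := by
      intro i
      rw [vNeg_apply]
      split <;> simp
    have hA : ∀ k, quadA n k ∈ cubeVertices n := by
      intro k i
      rw [quadA_apply]
      split <;> simp
    -- distance from vNeg to each quadA point is 2
    have hd : ∀ k, dist (f (vNeg n)) (quadB n k) = 2 := by
      intro k
      rw [← hmap k, hiso _ hv _ (hA k)]
      fin_cases k
      · exact distOne _ _ ⟨0, h0⟩
          (fun i hi => by
            have e0 := hval i 0 h0 hi
            rw [vNeg_apply, quadA_apply, if_neg e0, if_neg (fun h => h.1 rfl)])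
          (by rw [vNeg_apply, quadA_apply, if_pos rfl, if_neg (fun h => h.1 rfl)]; norm_num)
      · exact distOne _ _ ⟨1, h1⟩
          (fun i hi => by
            have e1 := hval i 1 h1 hi
            rw [vNeg_apply, quadA_apply]
            by_cases h : (i:ℕ) = 0
            · rw [if_pos h, if_pos ⟨by decide, Or.inl h⟩]
            · rw [if_neg h, if_neg (by push_neg; intro; exact ⟨h, fun hc => e1 (hc.trans c1)⟩)])
          (by rw [vNeg_apply, quadA_apply, if_neg (by norm_num),
              if_pos ⟨by decide, Or.inr rfl⟩]; norm_num)
      · exact distOne _ _ ⟨2, h2⟩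
          (fun i hi => by
            have e2 := hval i 2 h2 hi
            rw [vNeg_apply, quadA_apply]
            by_cases h : (i:ℕ) = 0
            · rw [if_pos h, if_pos ⟨by decide, Or.inl h⟩]
            · rw [if_neg h, if_neg (by push_neg; intro; exact ⟨h, fun hc => e2 (hc.trans c2)⟩)])
          (by rw [vNeg_apply, quadA_apply, if_neg (by norm_num),
              if_pos ⟨by decide, Or.inr rfl⟩]; norm_num)
      · exact distOne _ _ ⟨3, h3⟩
          (fun i hi => by
            have e3 := hval i 3 h3 hi
            rw [vNeg_apply, quadA_apply]
            by_cases h : (i:ℕ) = 0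
            · rw [if_pos h, if_pos ⟨by decide, Or.inl h⟩]
            · rw [if_neg h, if_neg (by push_neg; intro; exact ⟨h, fun hc => e3 (hc.trans c3)⟩)])
          (by rw [vNeg_apply, quadA_apply, if_neg (by norm_num),
              if_pos ⟨by decide, Or.inr rfl⟩]; norm_num)
    -- so each sum of squares is 4
    have hs : ∀ k, ∑ i, (f (vNeg n) i - quadB n k i) ^ 2 = 4 := by
      intro k
      have hd' := hd k
      rw [distSum] at hd'
      have hnn : (0:ℝ) ≤ ∑ i, (f (vNeg n) i - quadB n k i) ^ 2 :=
        Finset.sum_nonneg fun i _ => sq_nonneg _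
      have hsq := Real.sq_sqrt hnn
      rw [hd'] at hsq
      nlinarith [hsq]
    have htot : ∑ i, ∑ k : Fin 4, (f (vNeg n) i - quadB n k i) ^ 2 = 16 := by
      rw [Finset.sum_comm, Fin.sum_univ_four, hs 0, hs 1, hs 2, hs 3]
      norm_num
    -- but the three coordinates 0,1,2 each contribute 8
    have hw := hbij.mapsTo hv
    have val8 : ∀ (j : Fin n), (j:ℕ) = 0 ∨ (j:ℕ) = 1 ∨ (j:ℕ) = 2 →
        ∑ k : Fin 4, (f (vNeg n) j - quadB n k j) ^ 2 = 8 := by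
      intro j hj
      have hwj := hw j
      rw [Fin.sum_univ_four, quadB_eq n 0 (by decide), quadB_eq n 1 (by decide),
        quadB_eq n 2 (by decide), quadA_apply, quadA_apply, quadA_apply, quadB3_apply]
      rcases hj with h | h | h
      · rw [if_neg (fun hc => hc.1 rfl), if_pos ⟨by decide, Or.inl h⟩,
          if_pos ⟨by decide, Or.inl h⟩, if_neg (by push_neg; norm_num [h])]
        rcases hwj with hwj | hwj <;> rw [hwj] <;> norm_num
      · rw [if_neg (fun hc => hc.1 rfl),
          if_pos ⟨by decide, Or.inr (h.trans c1.symm)⟩,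
          if_neg (by push_neg; intro; exact ⟨by norm_num [h], by norm_num [h, c2]⟩),
          if_pos (Or.inl h)]
        rcases hwj with hwj | hwj <;> rw [hwj] <;> norm_num
      · rw [if_neg (fun hc => hc.1 rfl),
          if_neg (by push_neg; intro; exact ⟨by norm_num [h], by norm_num [h, c1]⟩),
          if_pos ⟨by decide, Or.inr (h.trans c2.symm)⟩,
          if_pos (Or.inr h)]
        rcases hwj with hwj | hwj <;> rw [hwj] <;> norm_num
    have hsub : ∑ i ∈ ({⟨0, h0⟩, ⟨1, h1⟩, ⟨2, h2⟩} : Finset (Fin n)),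
        (∑ k : Fin 4, (f (vNeg n) i - quadB n k i) ^ 2) ≤
        ∑ i, ∑ k : Fin 4, (f (vNeg n) i - quadB n k i) ^ 2 :=
      Finset.sum_le_sum_of_subset_of_nonneg (Finset.subset_univ _)
        (fun i _ _ => Finset.sum_nonneg fun k _ => sq_nonneg _)
    have hcard : ∑ i ∈ ({⟨0, h0⟩, ⟨1, h1⟩, ⟨2, h2⟩} : Finset (Fin n)),
        (∑ k : Fin 4, (f (vNeg n) i - quadB n k i) ^ 2) = 24 := by
      rw [Finset.sum_insert (by simp), Finset.sum_insert (by simp), Finset.sum_singleton,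
        val8 _ (Or.inl rfl), val8 _ (Or.inr (Or.inl rfl)), val8 _ (Or.inr (Or.inr rfl))]
      norm_num
    rw [htot] at hsub
    rw [hcard] at hsub
    linarith
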